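/- Let Y be an n×n complex matrix and X any n×n complex matrix, and let 𝟙 denote the column vector in ℂⁿ all of whose entries equal 1. If XY − YX = I − 𝟙𝟙ᵗ (where 𝟙𝟙ᵗ is the rank-one all-ones matrix), then for every k ≥ 0 one has 𝟙ᵗ Yᵏ 𝟙 = tr(Yᵏ). -/

import Mathlib

open Matrix

/-- If `X*Y - Y*X = 1 - 𝟙𝟙ᵗ` then `𝟙ᵗ Yᵏ 𝟙 = tr (Yᵏ)` for all `k ≥ 0`. -/
theorem ones_quadratic_form_eq_trace_pow
    (n : ℕ) (X Y : Matrix (Fin n) (Fin n) ℂ)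
    (hcomm : X * Y - Y * X = 1 - Matrix.of (fun _ _ => (1 : ℂ))) :
    ∀ k : ℕ,
      dotProduct (fun _ => (1 : ℂ)) ((Y ^ k).mulVec (fun _ => (1 : ℂ)))
        = (Y ^ k).trace := by
  intro k
  have hJ : Matrix.of (fun _ _ => (1 : ℂ)) = 1 - (X * Y - Y * X) := by
    rw [hcomm, sub_sub_cancel]
  have key : dotProduct (fun _ => (1 : ℂ)) ((Y ^ k).mulVec (fun _ => (1 : ℂ)))
      = ((Y ^ k) * Matrix.of (fun _ _ => (1 : ℂ))).trace := by
    simp [dotProduct, Matrix.mulVec, Matrix.trace, Matrix.mul_apply, Matrix.diag]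
  rw [key, hJ, Matrix.mul_sub, Matrix.mul_sub, Matrix.mul_one, trace_sub, trace_sub,
    ← Matrix.mul_assoc, ← Matrix.mul_assoc, Matrix.trace_mul_cycle (Y ^ k) X Y]
  have : Y * Y ^ k = Y ^ k * Y := by
    rw [← pow_succ, ← pow_succ']
  rw [Matrix.mul_assoc, ← Matrix.mul_assoc Y (Y ^ k) X, this, Matrix.mul_assoc, ← Matrix.mul_assoc]
  ring
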